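/- Let h, A, B be g-symmetric endomorphisms of V. For t ∈ ℝ small enough that g_t(x, y) := g((Id + t h)(x), y) is an inner product, let ⟨A, B⟩_{g_t} := tr(A ∘ B^{*_{g_t}}) denote the induced inner product on End(V), where B^{*_{g_t}} is the adjoint of B with respect to g_t. Then the function t ↦ ⟨A, B⟩_{g_t} is differentiable at t = 0 with derivative equal to 0. -/

import Mathlib

open RealInnerProductSpace Filter

lemma trace_adjoint_eq {V : Type*} [NormedAddCommGroup V] [InnerProductSpace ℝ V]
    [FiniteDimensional ℝ V] (T : V →ₗ[ℝ] V) :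
    LinearMap.trace ℝ V (LinearMap.adjoint T) = LinearMap.trace ℝ V T := by
  classical
  let b := stdOrthonormalBasis ℝ V
  rw [LinearMap.trace_eq_matrix_trace ℝ b.toBasis, LinearMap.trace_eq_matrix_trace ℝ b.toBasis]
  unfold Matrix.trace
  congr 1
  ext i
  simp only [Matrix.diag_apply, LinearMap.toMatrix_apply, OrthonormalBasis.coe_toBasis,
    OrthonormalBasis.coe_toBasis_repr_apply, OrthonormalBasis.repr_apply_apply]
  rw [LinearMap.adjoint_inner_right, real_inner_comm]

theorem stmt_7 {V : Type*} [NormedAddCommGroup V] [InnerProductSpace ℝ V]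
    [FiniteDimensional ℝ V]
    (h A B : Module.End ℝ V)
    (hsym : ∀ x y : V, ⟪h x, y⟫ = ⟪x, h y⟫)
    (hAsym : ∀ x y : V, ⟪A x, y⟫ = ⟪x, A y⟫)
    (hBsym : ∀ x y : V, ⟪B x, y⟫ = ⟪x, B y⟫)
    (Bstar : ℝ → Module.End ℝ V)
    (hBstar : ∀ᶠ t in nhds (0 : ℝ),
      ∀ x y : V, ⟪(1 + t • h) (B x), y⟫ = ⟪(1 + t • h) x, Bstar t y⟫) :
    HasDerivAt (fun t : ℝ => LinearMap.trace ℝ V (A ∘ₗ Bstar t)) 0 0 := by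
  classical
  set h' : V →L[ℝ] V := LinearMap.toContinuousLinearMap h with hh'
  set B' : V →L[ℝ] V := LinearMap.toContinuousLinearMap B with hB'
  -- the linear functional X ↦ trace (A ∘ X)
  set L : (V →L[ℝ] V) →ₗ[ℝ] ℝ :=
    (LinearMap.trace ℝ V) ∘ₗ (LinearMap.mulLeft ℝ A) ∘ₗ (ContinuousLinearMap.coeLM ℝ) with hL
  set Lc : (V →L[ℝ] V) →L[ℝ] ℝ := LinearMap.toContinuousLinearMap L with hLc
  have hLc_apply : ∀ X : V →L[ℝ] V, Lc X = LinearMap.trace ℝ V (A ∘ₗ (X : V →ₗ[ℝ] V)) := by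
    intro X
    have : Lc X = L X := congrFun (LinearMap.coe_toContinuousLinearMap' L) X
    rw [this, hL]
    rfl
  -- the curve F
  set F : ℝ → (V →L[ℝ] V) := fun t => Ring.inverse (1 + t • h') * B' * (1 + t • h') with hF
  -- derivative of M t = 1 + t • h'
  have hM : HasDerivAt (fun t : ℝ => (1 : V →L[ℝ] V) + t • h') h' 0 := by
    exact ((hasDerivAt_const (0:ℝ) (1 : V →L[ℝ] V)).add
      ((hasDerivAt_id (0:ℝ)).smul_const h')).congr_deriv (by simp)
  have h1 : ((1 : V →L[ℝ] V) + (0:ℝ) • h') = 1 := by simp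
  -- derivative of inverse of M
  have hinv : HasDerivAt (fun t : ℝ => Ring.inverse ((1 : V →L[ℝ] V) + t • h')) (-h') 0 := by
    have hg := hasFDerivAt_ringInverse (𝕜 := ℝ) (R := V →L[ℝ] V) 1
    rw [show ((1 : (V →L[ℝ] V)ˣ) : V →L[ℝ] V) = (1 : V →L[ℝ] V) + (0:ℝ) • h' from h1.symm] at hg
    have := hg.comp_hasDerivAt 0 hM
    exact this.congr_deriv (by simp)
  have hFd : HasDerivAt F (-(h' * B') + B' * h') 0 := by
    have := ((hinv.mul_const B').mul hM) 
    exact this.congr_deriv (by simp [h1])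
  have hDer : HasDerivAt (fun t => Lc (F t)) (Lc (-(h' * B') + B' * h')) 0 :=
    Lc.hasFDerivAt.comp_hasDerivAt 0 hFd
  -- eventual equality
  have hUnit : ∀ᶠ t in nhds (0:ℝ), IsUnit ((1 : V →L[ℝ] V) + t • h') := by
    have hc : Continuous (fun t : ℝ => (1 : V →L[ℝ] V) + t • h') :=
      continuous_const.add (continuous_id.smul continuous_const)
    have := hc.continuousAt (x := (0:ℝ))
    have hmem : {x : V →L[ℝ] V | IsUnit x} ∈ nhds ((1 : V →L[ℝ] V) + (0:ℝ) • h') := by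
      rw [h1]; exact Units.isOpen.mem_nhds (isUnit_one)
    exact this hmem
  have hEq : (fun t : ℝ => LinearMap.trace ℝ V (A ∘ₗ Bstar t)) =ᶠ[nhds 0]
      (fun t => Lc (F t)) := by
    filter_upwards [hBstar, hUnit] with t ht htU
    -- M ∘ Bstar t = B ∘ M as endomorphisms
    set M : Module.End ℝ V := 1 + t • h with hMdef
    have hMcoe : ((1 + t • h' : V →L[ℝ] V) : V →ₗ[ℝ] V) = M := by
      simp [hMdef, hh']
    have hMsym : ∀ x y : V, ⟪M x, y⟫ = ⟪x, M y⟫ := by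
      intro x y
      simp [hMdef, LinearMap.add_apply, LinearMap.smul_apply, inner_add_left, inner_add_right,
        inner_smul_left, inner_smul_right, hsym x y]
    have key : M * Bstar t = B * M := by
      ext y
      apply ext_inner_left ℝ
      intro x
      have h1' := ht x y
      calc ⟪x, (M * Bstar t) y⟫ = ⟪M x, Bstar t y⟫ := (hMsym x _).symm
        _ = ⟪M (B x), y⟫ := (h1').symm
        _ = ⟪B x, M y⟫ := hMsym _ _
        _ = ⟪x, (B * M) y⟫ := hBsym _ _
    -- transfer unit to End
    obtain ⟨u, hu⟩ := id htU
    have hFcoe : ((F t : V →L[ℝ] V) : V →ₗ[ℝ] V) = Bstar t := by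
      have hMu : M * ((F t : V →L[ℝ] V) : V →ₗ[ℝ] V) = M * Bstar t := by
        rw [key]
        have : (1 + t • h' : V →L[ℝ] V) * F t = B' * (1 + t • h') := by
          rw [hF]
          simp only
          rw [← mul_assoc, ← mul_assoc, ← hu, Ring.inverse_unit, Units.mul_inv, one_mul]
        calc M * ((F t : V →L[ℝ] V) : V →ₗ[ℝ] V)
            = (((1 + t • h' : V →L[ℝ] V) * F t : V →L[ℝ] V) : V →ₗ[ℝ] V) := by
              rw [← hMcoe]; rfl
          _ = ((B' * (1 + t • h') : V →L[ℝ] V) : V →ₗ[ℝ] V) := by rw [this]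
          _ = B * M := by rw [← hMcoe]; simp [hB']
      have hMun : IsUnit M := by
        rw [← hMcoe]
        exact (htU.map (ContinuousLinearMap.toLinearMapRingHom (R₁ := ℝ) (M₁ := V)))
      exact hMun.mul_left_cancel hMu
    rw [hLc_apply, hFcoe]
  rw [hEq.hasDerivAt_iff]
  refine hDer.congr_deriv ?_
  -- show Lc (-(h'*B') + B'*h') = 0
  rw [hLc_apply]
  have hcoe : ((-(h' * B') + B' * h' : V →L[ℝ] V) : V →ₗ[ℝ] V) = -(h * B) + B * h := by
    simp [hh', hB']
  rw [hcoe]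
  have hABh : LinearMap.trace ℝ V (A * (h * B)) = LinearMap.trace ℝ V (A * (B * h)) := by
    have hadj : LinearMap.adjoint (A * (h * B)) = (B * h) * A := by
      have hA : LinearMap.adjoint A = A := ((LinearMap.eq_adjoint_iff A A).2 hAsym).symm
      have hB2 : LinearMap.adjoint B = B := ((LinearMap.eq_adjoint_iff B B).2 hBsym).symm
      have hh2 : LinearMap.adjoint h = h := ((LinearMap.eq_adjoint_iff h h).2 hsym).symm
      rw [← LinearMap.star_eq_adjoint, star_mul, star_mul, LinearMap.star_eq_adjoint,
        LinearMap.star_eq_adjoint, LinearMap.star_eq_adjoint, hA, hB2, hh2, mul_assoc]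
    calc LinearMap.trace ℝ V (A * (h * B))
        = LinearMap.trace ℝ V (LinearMap.adjoint (A * (h * B))) := (trace_adjoint_eq _).symm
      _ = LinearMap.trace ℝ V ((B * h) * A) := by rw [hadj]
      _ = LinearMap.trace ℝ V (A * (B * h)) := LinearMap.trace_mul_comm ℝ _ _
  have : A ∘ₗ (-(h * B) + B * h) = -(A * (h * B)) + A * (B * h) := by
    ext x; simp [Module.End.mul_eq_comp]
  rw [this, map_add, map_neg, hABh]
  ring
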